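/- Let T* ∈ (0,1), γ* ∈ (0,1), γ₃, γ₄ ∈ (0,1), and let k ∈ C^{γ₃}([0,T*]) and f ∈ C^{γ₄}([0,T*]) with k(0) ≠ 0 and f(0) ≠ 0. Then for any λ, ε₆* ∈ (0,1) and each ε* ∈ (0, 1−λ^{ε₆*}), the estimate |log_λ |G_f(λt)/G_f(t)|| < ε₆* holds for every t ∈ (0, t₄*], where t₄* = min{T*, (C₇*)^{1/γ̄}}, γ̄ = min{γ₃, γ₄}, and C₇* = ε* |f(0)| |k(0)| Γ(1+x*) / (3[|f(0)| ⟨k⟩^{(γ₃)}_{[0,T*]} + ⟨f⟩^{(γ₄)}_{[0,T*]} ‖k‖_{C([0,T*])}]); in particular G_f(t) ≠ 0 for such t. -/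

import Mathlib

open Set MeasureTheory

/-- Hölder seminorm `⟨f⟩^{(α)}_{[0,T]}` of `f` on `[0,T]`. -/
noncomputable def holderSemi (f : ℝ → ℝ) (T α : ℝ) : ℝ :=
  sSup {y : ℝ | ∃ s t : ℝ, 0 ≤ s ∧ s < t ∧ t ≤ T ∧ y = |f t - f s| / (t - s) ^ α}

/-- Sup norm `‖f‖_{C([0,T])}`. -/
noncomputable def supNorm (f : ℝ → ℝ) (T : ℝ) : ℝ :=
  sSup ((fun t => |f t|) '' Set.Icc 0 T)

/-- The minimum value of the Euler Gamma function on `(0, ∞)`, i.e. `Γ(1 + x*)`. -/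
noncomputable def GammaMin : ℝ := sInf (Real.Gamma '' Set.Ioi (0 : ℝ))

/-- `G_f(t) = ∫₀¹ (1-z)^{γ*-1} k(t - zt) f(zt) dz`. -/
noncomputable def Gbig (γs : ℝ) (k f : ℝ → ℝ) (t : ℝ) : ℝ :=
  ∫ z in (0:ℝ)..1, (1 - z) ^ (γs - 1) * k (t - z * t) * f (z * t)

lemma holderSemi_nonneg (f : ℝ → ℝ) (T α : ℝ) (hT : 0 < T) : 0 ≤ holderSemi f T α := by
  unfold holderSemi
  set S := {y : ℝ | ∃ s t : ℝ, 0 ≤ s ∧ s < t ∧ t ≤ T ∧ y = |f t - f s| / (t - s) ^ α} with hS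
  by_cases hb : BddAbove S
  · have hmem : |f T - f 0| / (T - 0) ^ α ∈ S := ⟨0, T, le_refl _, hT, le_refl _, rfl⟩
    have h0 : 0 ≤ |f T - f 0| / (T - 0) ^ α :=
      div_nonneg (abs_nonneg _) (Real.rpow_nonneg (by linarith) _)
    exact h0.trans (le_csSup hb hmem)
  · rw [Real.sSup_of_not_bddAbove hb]

lemma le_supNorm (k : ℝ → ℝ) (T : ℝ) (hkc : ContinuousOn k (Set.Icc 0 T))
    (x : ℝ) (hx : x ∈ Set.Icc 0 T) : |k x| ≤ supNorm k T := by
  have hb : BddAbove ((fun t => |k t|) '' Set.Icc 0 T) :=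
    (isCompact_Icc.image_of_continuousOn hkc.abs).bddAbove
  exact le_csSup hb ⟨x, hx, rfl⟩

lemma exp_neg_one_le_Gamma {x : ℝ} (hx : 0 < x) : Real.exp (-1) ≤ Real.Gamma x := by
  have key : ∀ y : ℝ, 1 ≤ y → Real.exp (-1) ≤ Real.Gamma y := by
    intro y hy
    rw [Real.Gamma_eq_integral (by linarith)]
    have hconv : IntegrableOn (fun t : ℝ => Real.exp (-t) * t ^ (y - 1)) (Ioi 0) :=
      Real.GammaIntegral_convergent (by linarith)
    have hexp : IntegrableOn (fun t : ℝ => Real.exp (-t)) (Ioi 0) := by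
      have := Real.GammaIntegral_convergent (s := 1) one_pos
      refine this.congr_fun (fun t ht => ?_) measurableSet_Ioi
      simp [Real.rpow_zero]
    have h1 : Real.exp (-1) = ∫ t in Ioi (1:ℝ), Real.exp (-t) := (integral_exp_neg_Ioi 1).symm
    rw [h1]
    have step1 : (∫ t in Ioi (1:ℝ), Real.exp (-t)) ≤
        ∫ t in Ioi (1:ℝ), Real.exp (-t) * t ^ (y - 1) := by
      refine setIntegral_mono_on (hexp.mono_set (Ioi_subset_Ioi zero_le_one))
        (hconv.mono_set (Ioi_subset_Ioi zero_le_one)) measurableSet_Ioi ?_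
      intro t ht
      have ht1 : (1:ℝ) ≤ t := le_of_lt ht
      nth_rewrite 1 [← mul_one (Real.exp (-t))]
      refine mul_le_mul_of_nonneg_left ?_ (Real.exp_pos _).le
      calc (1:ℝ) = 1 ^ (y - 1) := (Real.one_rpow _).symm
        _ ≤ t ^ (y - 1) := Real.rpow_le_rpow zero_le_one ht1 (by linarith)
    have step2 : (∫ t in Ioi (1:ℝ), Real.exp (-t) * t ^ (y - 1)) ≤
        ∫ t in Ioi (0:ℝ), Real.exp (-t) * t ^ (y - 1) := by
      refine setIntegral_mono_set hconv ?_ (HasSubset.Subset.eventuallyLE (Ioi_subset_Ioi zero_le_one))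
      filter_upwards [self_mem_ae_restrict measurableSet_Ioi] with t ht
      exact mul_nonneg (Real.exp_pos _).le (Real.rpow_nonneg (le_of_lt ht) _)
    linarith
  rcases le_or_gt 1 x with h | h
  · exact key x h
  · have h1 : Real.Gamma (x + 1) = x * Real.Gamma x := Real.Gamma_add_one (ne_of_gt hx)
    have h2 : Real.exp (-1) ≤ Real.Gamma (x + 1) := key _ (by linarith)
    have h3 : 0 < Real.Gamma x := Real.Gamma_pos_of_pos hx
    nlinarith

lemma GammaMin_pos : 0 < GammaMin := by
  have : Real.exp (-1) ≤ GammaMin := by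
    refine le_csInf ⟨1, 1, by simp, Real.Gamma_one⟩ ?_
    rintro y ⟨x, hx, rfl⟩
    exact exp_neg_one_le_Gamma hx
  linarith [Real.exp_pos (-1:ℝ)]

lemma GammaMin_le_one : GammaMin ≤ 1 := by
  have hb : BddBelow (Real.Gamma '' Set.Ioi (0:ℝ)) := by
    refine ⟨0, ?_⟩
    rintro y ⟨x, hx, rfl⟩
    exact (Real.Gamma_pos_of_pos hx).le
  have : Real.Gamma 1 ∈ Real.Gamma '' Set.Ioi (0:ℝ) := ⟨1, by simp, rfl⟩
  simpa [GammaMin, Real.Gamma_one] using csInf_le hb this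

lemma w_intervalIntegrable {γs : ℝ} (hγs : γs ∈ Set.Ioo (0:ℝ) 1) :
    IntervalIntegrable (fun z : ℝ => (1 - z) ^ (γs - 1)) volume 0 1 := by
  have h : IntervalIntegrable (fun x : ℝ => x ^ (γs - 1)) volume 0 1 :=
    intervalIntegral.intervalIntegrable_rpow' (by linarith [hγs.1])
  simpa using (h.comp_sub_left 1).symm

lemma w_integral {γs : ℝ} (hγs : γs ∈ Set.Ioo (0:ℝ) 1) :
    (∫ z in (0:ℝ)..1, (1 - z) ^ (γs - 1)) = 1 / γs := by
  rw [show (fun z : ℝ => (1 - z) ^ (γs - 1)) = fun z : ℝ => (fun x : ℝ => x ^ (γs - 1)) (1 - z) from rfl]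
  rw [intervalIntegral.integral_comp_sub_left (fun x : ℝ => x ^ (γs - 1)) 1]
  norm_num
  rw [integral_rpow (Or.inl (by linarith [hγs.1]))]
  rw [Real.one_rpow, Real.zero_rpow (by linarith [hγs.1] : γs - 1 + 1 ≠ 0)]
  ring_nf

/-- Key estimate: `|G(s) - k(0)f(0)/γ| ≤ D/γ · s^{γ̄}`. -/
lemma key_est (Ts γs γ₃ γ₄ : ℝ) (k f : ℝ → ℝ)
    (hTs : Ts ∈ Set.Ioo (0:ℝ) 1) (hγs : γs ∈ Set.Ioo (0:ℝ) 1)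
    (hγ₃ : γ₃ ∈ Set.Ioo (0:ℝ) 1) (hγ₄ : γ₄ ∈ Set.Ioo (0:ℝ) 1)
    (hkc : ContinuousOn k (Set.Icc 0 Ts))
    (hkh : ∀ s t : ℝ, 0 ≤ s → s ≤ t → t ≤ Ts →
      |k t - k s| ≤ holderSemi k Ts γ₃ * (t - s) ^ γ₃)
    (hfc : ContinuousOn f (Set.Icc 0 Ts))
    (hfh : ∀ s t : ℝ, 0 ≤ s → s ≤ t → t ≤ Ts →
      |f t - f s| ≤ holderSemi f Ts γ₄ * (t - s) ^ γ₄)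
    (s : ℝ) (hs0 : 0 ≤ s) (hsT : s ≤ Ts) :
    |Gbig γs k f s - k 0 * f 0 / γs| ≤
      (|f 0| * holderSemi k Ts γ₃ + holderSemi f Ts γ₄ * supNorm k Ts) / γs *
        s ^ (min γ₃ γ₄) := by
  set D : ℝ := |f 0| * holderSemi k Ts γ₃ + holderSemi f Ts γ₄ * supNorm k Ts with hD
  set γb : ℝ := min γ₃ γ₄ with hγb
  have hγb0 : 0 < γb := lt_min hγ₃.1 hγ₄.1
  have hs1 : s ≤ 1 := le_of_lt (lt_of_le_of_lt hsT hTs.2)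
  have hsTnn : (0:ℝ) ≤ Ts := hTs.1.le
  -- pointwise bound
  have hpt : ∀ z ∈ Set.Icc (0:ℝ) 1,
      |k (s - z * s) * f (z * s) - k 0 * f 0| ≤ D * s ^ γb := by
    intro z hz
    obtain ⟨hz0, hz1⟩ := hz
    have ha0 : 0 ≤ s - z * s := by nlinarith
    have hb0 : 0 ≤ z * s := mul_nonneg hz0 hs0
    have haT : s - z * s ≤ Ts := by nlinarith
    have hbT : z * s ≤ Ts := by nlinarith
    have h1 := hkh 0 (s - z * s) le_rfl ha0 haT
    have h2 := hfh 0 (z * s) le_rfl hb0 hbT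
    rw [sub_zero] at h1 h2
    have h3 : |k (s - z * s)| ≤ supNorm k Ts := le_supNorm k Ts hkc _ ⟨ha0, haT⟩
    have hkn : 0 ≤ holderSemi k Ts γ₃ := holderSemi_nonneg k Ts γ₃ hTs.1
    have hfn : 0 ≤ holderSemi f Ts γ₄ := holderSemi_nonneg f Ts γ₄ hTs.1
    have hsn : 0 ≤ supNorm k Ts := (abs_nonneg _).trans h3
    rcases eq_or_lt_of_le hs0 with hs | hs
    · simp only [← hs, mul_zero, sub_zero, Real.zero_rpow (ne_of_gt hγb0)]
      simp
    · have e1 : (s - z * s) ^ γ₃ ≤ s ^ γb := by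
        calc (s - z * s) ^ γ₃ ≤ s ^ γ₃ :=
              Real.rpow_le_rpow ha0 (by nlinarith) hγ₃.1.le
          _ ≤ s ^ γb := Real.rpow_le_rpow_of_exponent_ge hs hs1 (min_le_left _ _)
      have e2 : (z * s) ^ γ₄ ≤ s ^ γb := by
        calc (z * s) ^ γ₄ ≤ s ^ γ₄ :=
              Real.rpow_le_rpow hb0 (by nlinarith) hγ₄.1.le
          _ ≤ s ^ γb := Real.rpow_le_rpow_of_exponent_ge hs hs1 (min_le_right _ _)
      have decomp : k (s - z * s) * f (z * s) - k 0 * f 0 =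
          (k (s - z * s) - k 0) * f 0 + k (s - z * s) * (f (z * s) - f 0) := by ring
      calc |k (s - z * s) * f (z * s) - k 0 * f 0|
          ≤ |(k (s - z * s) - k 0) * f 0| + |k (s - z * s) * (f (z * s) - f 0)| := by
            rw [decomp]; exact abs_add_le _ _
        _ = |k (s - z * s) - k 0| * |f 0| + |k (s - z * s)| * |f (z * s) - f 0| := by
            rw [abs_mul, abs_mul]
        _ ≤ D * s ^ γb := by
            have hsp : 0 ≤ s ^ γb := Real.rpow_nonneg hs0 _
            have t1 : |k (s - z * s) - k 0| * |f 0| ≤ holderSemi k Ts γ₃ * s ^ γb * |f 0| := by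
              have : |k (s - z * s) - k 0| ≤ holderSemi k Ts γ₃ * s ^ γb :=
                h1.trans (by nlinarith)
              exact mul_le_mul_of_nonneg_right this (abs_nonneg _)
            have t2 : |k (s - z * s)| * |f (z * s) - f 0| ≤
                supNorm k Ts * (holderSemi f Ts γ₄ * s ^ γb) := by
              have hf2 : |f (z * s) - f 0| ≤ holderSemi f Ts γ₄ * s ^ γb :=
                h2.trans (by nlinarith)
              exact mul_le_mul h3 hf2 (abs_nonneg _) hsn
            rw [hD]; nlinarith
  -- integrability
  have wInt := w_intervalIntegrable hγs
  have hmap1 : ∀ z ∈ Set.uIcc (0:ℝ) 1, s - z * s ∈ Set.Icc (0:ℝ) Ts := by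
    intro z hz
    rw [Set.uIcc_of_le zero_le_one] at hz
    obtain ⟨hz0, hz1⟩ := hz
    exact ⟨by nlinarith, by nlinarith⟩
  have hmap2 : ∀ z ∈ Set.uIcc (0:ℝ) 1, z * s ∈ Set.Icc (0:ℝ) Ts := by
    intro z hz
    rw [Set.uIcc_of_le zero_le_one] at hz
    obtain ⟨hz0, hz1⟩ := hz
    exact ⟨mul_nonneg hz0 hs0, by nlinarith⟩
  have gcont : ContinuousOn (fun z : ℝ => k (s - z * s) * f (z * s)) (Set.uIcc 0 1) := by
    apply ContinuousOn.mul
    · exact hkc.comp ((continuous_const.sub (continuous_id.mul continuous_const)).continuousOn) hmap1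
    · exact hfc.comp ((continuous_id.mul continuous_const).continuousOn) hmap2
  have hInt1 : IntervalIntegrable
      (fun z : ℝ => (1 - z) ^ (γs - 1) * (k (s - z * s) * f (z * s))) volume 0 1 :=
    wInt.mul_continuousOn gcont
  have hInt2 : IntervalIntegrable
      (fun z : ℝ => (1 - z) ^ (γs - 1) * (k 0 * f 0)) volume 0 1 :=
    wInt.mul_const _
  have hInt3 : IntervalIntegrable
      (fun z : ℝ => (1 - z) ^ (γs - 1) * (k (s - z * s) * f (z * s) - k 0 * f 0)) volume 0 1 :=
    wInt.mul_continuousOn (gcont.sub continuousOn_const)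
  -- rewrite difference
  have hGdiff : Gbig γs k f s - k 0 * f 0 / γs =
      ∫ z in (0:ℝ)..1, (1 - z) ^ (γs - 1) * (k (s - z * s) * f (z * s) - k 0 * f 0) := by
    have e : (∫ z in (0:ℝ)..1, (1 - z) ^ (γs - 1) * (k (s - z * s) * f (z * s) - k 0 * f 0)) =
        (∫ z in (0:ℝ)..1, (1 - z) ^ (γs - 1) * (k (s - z * s) * f (z * s))) -
        ∫ z in (0:ℝ)..1, (1 - z) ^ (γs - 1) * (k 0 * f 0) := by
      rw [← intervalIntegral.integral_sub hInt1 hInt2]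
      congr 1; ext z; ring
    rw [e]
    have e2 : (∫ z in (0:ℝ)..1, (1 - z) ^ (γs - 1) * (k 0 * f 0)) = (1 / γs) * (k 0 * f 0) := by
      rw [intervalIntegral.integral_mul_const, w_integral hγs]
    have e3 : Gbig γs k f s = ∫ z in (0:ℝ)..1, (1 - z) ^ (γs - 1) * (k (s - z * s) * f (z * s)) := by
      unfold Gbig; congr 1; ext z; ring
    rw [e2, e3]; ring
  rw [hGdiff]
  calc |∫ z in (0:ℝ)..1, (1 - z) ^ (γs - 1) * (k (s - z * s) * f (z * s) - k 0 * f 0)|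
      ≤ ∫ z in (0:ℝ)..1, |(1 - z) ^ (γs - 1) * (k (s - z * s) * f (z * s) - k 0 * f 0)| :=
        intervalIntegral.abs_integral_le_integral_abs zero_le_one
    _ ≤ ∫ z in (0:ℝ)..1, (1 - z) ^ (γs - 1) * (D * s ^ γb) := by
        refine intervalIntegral.integral_mono_on zero_le_one hInt3.abs (wInt.mul_const _) ?_
        intro z hz
        rw [abs_mul, abs_of_nonneg (Real.rpow_nonneg (by linarith [hz.2]) _)]
        exact mul_le_mul_of_nonneg_left (hpt z hz) (Real.rpow_nonneg (by linarith [hz.2]) _)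
    _ = D / γs * s ^ γb := by
        rw [intervalIntegral.integral_mul_const, w_integral hγs]; ring

set_option maxHeartbeats 1000000 in
theorem stmt_14 (Ts γs γ₃ γ₄ : ℝ) (k f : ℝ → ℝ)
    (hTs : Ts ∈ Set.Ioo (0:ℝ) 1) (hγs : γs ∈ Set.Ioo (0:ℝ) 1)
    (hγ₃ : γ₃ ∈ Set.Ioo (0:ℝ) 1) (hγ₄ : γ₄ ∈ Set.Ioo (0:ℝ) 1)
    (hkc : ContinuousOn k (Set.Icc 0 Ts))
    (hkh : ∀ s t : ℝ, 0 ≤ s → s ≤ t → t ≤ Ts →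
      |k t - k s| ≤ holderSemi k Ts γ₃ * (t - s) ^ γ₃)
    (hfc : ContinuousOn f (Set.Icc 0 Ts))
    (hfh : ∀ s t : ℝ, 0 ≤ s → s ≤ t → t ≤ Ts →
      |f t - f s| ≤ holderSemi f Ts γ₄ * (t - s) ^ γ₄)
    (hk0 : k 0 ≠ 0) (hf0 : f 0 ≠ 0) :
    ∀ lam ∈ Set.Ioo (0:ℝ) 1, ∀ ε₆ ∈ Set.Ioo (0:ℝ) 1,
      ∀ εs ∈ Set.Ioo (0:ℝ) (1 - lam ^ ε₆),
        ∀ t ∈ Set.Ioc (0:ℝ)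
          (min Ts ((εs * |f 0| * |k 0| * GammaMin /
              (3 * (|f 0| * holderSemi k Ts γ₃ +
                holderSemi f Ts γ₄ * supNorm k Ts))) ^ (1 / min γ₃ γ₄))),
          Gbig γs k f t ≠ 0 ∧
          |Real.logb lam (|Gbig γs k f (lam * t) / Gbig γs k f t|)| < ε₆ := by
  intro lam hlam ε₆ hε₆ εs hεs t ht
  set D : ℝ := |f 0| * holderSemi k Ts γ₃ + holderSemi f Ts γ₄ * supNorm k Ts with hD
  set γb : ℝ := min γ₃ γ₄ with hγb
  have hγb0 : 0 < γb := lt_min hγ₃.1 hγ₄.1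
  have hkn : 0 ≤ holderSemi k Ts γ₃ := holderSemi_nonneg k Ts γ₃ hTs.1
  have hfn : 0 ≤ holderSemi f Ts γ₄ := holderSemi_nonneg f Ts γ₄ hTs.1
  have hsn : |k 0| ≤ supNorm k Ts := le_supNorm k Ts hkc 0 ⟨le_refl _, hTs.1.le⟩
  have hf0' : 0 < |f 0| := abs_pos.mpr hf0
  have hk0' : 0 < |k 0| := abs_pos.mpr hk0
  have hDnn : 0 ≤ D := by
    rw [hD]
    exact add_nonneg (mul_nonneg (abs_nonneg _) hkn)
      (mul_nonneg hfn ((abs_nonneg _).trans hsn))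
  rcases eq_or_lt_of_le hDnn with hD0 | hDpos
  · -- degenerate case: D = 0, hypothesis on t is vacuous
    exfalso
    have h30 : (εs * |f 0| * |k 0| * GammaMin /
        (3 * (|f 0| * holderSemi k Ts γ₃ + holderSemi f Ts γ₄ * supNorm k Ts))) = 0 := by
      rw [← hD, ← hD0]
      simp
    rw [h30, Real.zero_rpow (by positivity : 1 / min γ₃ γ₄ ≠ 0)] at ht
    have h1 := ht.2
    rw [min_eq_right hTs.1.le] at h1
    linarith [ht.1]
  · set C₇ : ℝ := εs * |f 0| * |k 0| * GammaMin /
        (3 * (|f 0| * holderSemi k Ts γ₃ + holderSemi f Ts γ₄ * supNorm k Ts)) with hC₇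
    obtain ⟨ht0, htle⟩ := ht
    have htTs : t ≤ Ts := htle.trans (min_le_left _ _)
    have htC : t ≤ C₇ ^ (1 / γb) := htle.trans (min_le_right _ _)
    have hεs0 : 0 < εs := hεs.1
    have hlam0 : 0 < lam := hlam.1
    have hlam1 : lam < 1 := hlam.2
    have hlamε : 0 < lam ^ ε₆ := Real.rpow_pos_of_pos hlam0 ε₆
    have hεs1 : εs < 1 - lam ^ ε₆ := hεs.2
    have hεslt1 : εs < 1 := by linarith
    have hγspos : 0 < γs := hγs.1
    have hC₇pos : 0 < C₇ := by
      rw [hC₇, ← hD]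
      have h1 : 0 < εs * |f 0| * |k 0| * GammaMin := by
        have := GammaMin_pos; positivity
      exact div_pos h1 (by linarith)
    have httest : t ^ γb ≤ C₇ := by
      have h1 : t ^ γb ≤ (C₇ ^ (1 / γb)) ^ γb := Real.rpow_le_rpow ht0.le htC hγb0.le
      rwa [← Real.rpow_mul hC₇pos.le, one_div_mul_cancel (ne_of_gt hγb0),
        Real.rpow_one] at h1
    -- the common bound
    set M : ℝ := |k 0| * |f 0| / γs with hM
    have hMpos : 0 < M := by rw [hM]; positivity
    have hbound : ∀ s : ℝ, 0 ≤ s → s ≤ Ts → s ^ γb ≤ C₇ →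
        |Gbig γs k f s - k 0 * f 0 / γs| ≤ εs * M / 3 := by
      intro s hs0 hsT hsC
      have h1 := key_est Ts γs γ₃ γ₄ k f hTs hγs hγ₃ hγ₄ hkc hkh hfc hfh s hs0 hsT
      rw [← hD, ← hγb] at h1
      have h2 : D / γs * s ^ γb ≤ D / γs * C₇ :=
        mul_le_mul_of_nonneg_left hsC (by positivity)
      have h3 : D / γs * C₇ ≤ εs * M / 3 := by
        have e : D / γs * C₇ = εs * |f 0| * |k 0| * GammaMin / (3 * γs) := by
          rw [hC₇, ← hD]
          field_simp
        calc D / γs * C₇ = εs * |f 0| * |k 0| * GammaMin / (3 * γs) := e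
          _ ≤ εs * |f 0| * |k 0| * 1 / (3 * γs) := by
              gcongr
              exact GammaMin_le_one
          _ = εs * M / 3 := by rw [hM]; ring
      linarith
    have hGt := hbound t ht0.le htTs httest
    have hlt0 : 0 ≤ lam * t := by positivity
    have hltTs : lam * t ≤ Ts := by nlinarith
    have hltC : (lam * t) ^ γb ≤ C₇ := by
      refine le_trans ?_ httest
      exact Real.rpow_le_rpow hlt0 (by nlinarith) hγb0.le
    have hGl := hbound (lam * t) hlt0 hltTs hltC
    -- abbreviations
    set Gt : ℝ := Gbig γs k f t with hGtd
    set Gl : ℝ := Gbig γs k f (lam * t) with hGld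
    have hAM : |k 0 * f 0 / γs| = M := by
      rw [hM, abs_div, abs_mul, abs_of_pos hγspos]
    have hGtlb : M - εs * M / 3 ≤ |Gt| := by
      have := abs_sub_abs_le_abs_sub (k 0 * f 0 / γs) Gt
      rw [hAM, abs_sub_comm] at this
      linarith
    have hGtub : |Gt| ≤ M + εs * M / 3 := by
      have := abs_sub_abs_le_abs_sub Gt (k 0 * f 0 / γs)
      rw [hAM] at this
      linarith
    have hGllb : M - εs * M / 3 ≤ |Gl| := by
      have := abs_sub_abs_le_abs_sub (k 0 * f 0 / γs) Gl
      rw [hAM, abs_sub_comm] at this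
      linarith
    have hGlub : |Gl| ≤ M + εs * M / 3 := by
      have := abs_sub_abs_le_abs_sub Gl (k 0 * f 0 / γs)
      rw [hAM] at this
      linarith
    have hGtpos : 0 < |Gt| := by nlinarith
    have hGlpos : 0 < |Gl| := by nlinarith
    have hGtne : Gt ≠ 0 := by
      intro h
      rw [h, abs_zero] at hGtpos
      exact lt_irrefl 0 hGtpos
    refine ⟨hGtne, ?_⟩
    -- the ratio
    have hr : |Gl / Gt| = |Gl| / |Gt| := abs_div _ _
    have hkey : (1 - εs) * (M + εs * M / 3) ≤ M - εs * M / 3 := by nlinarith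
    have hlow : lam ^ ε₆ < |Gl| / |Gt| := by
      have h1 : (1 - εs) ≤ |Gl| / |Gt| := by
        rw [le_div_iff₀ hGtpos]
        calc (1 - εs) * |Gt| ≤ (1 - εs) * (M + εs * M / 3) := by nlinarith
          _ ≤ M - εs * M / 3 := hkey
          _ ≤ |Gl| := hGllb
      linarith
    have hup : |Gl| / |Gt| < lam ^ (-ε₆) := by
      have h1 : |Gl| / |Gt| ≤ 1 / (1 - εs) := by
        rw [div_le_div_iff₀ hGtpos (by linarith)]
        calc |Gl| * (1 - εs) ≤ (M + εs * M / 3) * (1 - εs) := by nlinarith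
          _ ≤ M - εs * M / 3 := by nlinarith [hkey]
          _ ≤ |Gt| := hGtlb
          _ = 1 * |Gt| := (one_mul _).symm
      have h2 : (1:ℝ) / (1 - εs) < 1 / (lam ^ ε₆) := by
        apply div_lt_div_of_pos_left one_pos hlamε
        linarith
      have h3 : (1:ℝ) / (lam ^ ε₆) = lam ^ (-ε₆) := by
        rw [Real.rpow_neg hlam0.le, one_div]
      linarith
    have hrpos : 0 < |Gl| / |Gt| := div_pos hGlpos hGtpos
    -- convert to logb
    have hloglam : Real.log lam < 0 := Real.log_neg hlam0 hlam1
    have hlog1 : ε₆ * Real.log lam < Real.log (|Gl| / |Gt|) := by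
      have := Real.log_lt_log hlamε hlow
      rwa [Real.log_rpow hlam0] at this
    have hlog2 : Real.log (|Gl| / |Gt|) < -(ε₆ * Real.log lam) := by
      have := Real.log_lt_log hrpos hup
      rwa [Real.log_rpow hlam0, neg_mul] at this
    rw [hr]
    have hlogb : Real.logb lam (|Gl| / |Gt|) =
        Real.log (|Gl| / |Gt|) / Real.log lam := rfl
    rw [hlogb, abs_div, abs_of_neg hloglam,
      div_lt_iff₀ (by linarith : (0:ℝ) < -Real.log lam), abs_lt]
    constructor <;> linarith
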